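/- More generally, every Markov mapping p ↦ pQ from R_+^m to R_+^n (Q a row-stochastic partition matrix with positive entries on its support) is an isometry for the Fisher metric formula extended to the positive cone: for p ∈ R_+^m and arbitrary u, v ∈ R^m, sum_{j} (uQ)_j (vQ)_j / (pQ)_j = sum_i u_i v_i / p_i. -/

import Mathlib

/-- Every Markov mapping `p ↦ pQ` from `R_+^m` to `R_+^n` (with `Q` a
row-stochastic partition matrix, positive on its support) is an isometry for the
Fisher metric extended to the positive cone: for strictly positive `p` and arbitrary
`u, v ∈ R^m`, `∑_j (uQ)_j (vQ)_j / (pQ)_j = ∑_i u_i v_i / p_i`. -/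
theorem markov_map_fisher_isometry_cone {m n : ℕ}
    (Q : Matrix (Fin m) (Fin n) ℝ) (part : Fin n → Fin m)
    (hsupp : ∀ i j, Q i j ≠ 0 → part j = i)
    (hpos : ∀ j, 0 < Q (part j) j)
    (hsum : ∀ i : Fin m,
      ∑ j ∈ Finset.univ.filter (fun j => part j = i), Q i j = 1)
    (p : Fin m → ℝ) (hp : ∀ i, 0 < p i) (u v : Fin m → ℝ) :
    ∑ j, (∑ i, u i * Q i j) * (∑ i, v i * Q i j) / (∑ i, p i * Q i j)
      = ∑ i, u i * v i / p i := by
  have hcol : ∀ (w : Fin m → ℝ) j, (∑ i, w i * Q i j) = w (part j) * Q (part j) j := by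
    intro w j
    rw [Finset.sum_eq_single (part j)]
    · intro i _ hne
      have : Q i j = 0 := by
        by_contra h
        exact hne (hsupp i j h).symm
      simp [this]
    · simp
  have hterm : ∀ j, (∑ i, u i * Q i j) * (∑ i, v i * Q i j) / (∑ i, p i * Q i j)
      = u (part j) * v (part j) / p (part j) * Q (part j) j := by
    intro j
    rw [hcol u j, hcol v j, hcol p j]
    have hq := (hpos j).ne'
    have hpj := (hp (part j)).ne'
    field_simp
  calc ∑ j, (∑ i, u i * Q i j) * (∑ i, v i * Q i j) / (∑ i, p i * Q i j)
      = ∑ j, u (part j) * v (part j) / p (part j) * Q (part j) j := by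
        exact Finset.sum_congr rfl fun j _ => hterm j
    _ = ∑ i, ∑ j ∈ Finset.univ.filter (fun j => part j = i),
          u (part j) * v (part j) / p (part j) * Q (part j) j := by
        rw [Finset.sum_fiberwise]
    _ = ∑ i, u i * v i / p i := by
        refine Finset.sum_congr rfl fun i _ => ?_
        rw [Finset.sum_congr rfl (fun j hj => ?_), ← Finset.mul_sum, hsum i, mul_one]
        rw [Finset.mem_filter] at hj
        rw [hj.2]
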